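/- For every integer l ≥ 3 and every z ∈ (0,1), H(0,z) < 0. -/
import Mathlib

set_option maxHeartbeats 4000000
set_option maxRecDepth 100000

open Real

/-- `H(u,z)` for the `(l,3,3)` MN codes. -/
noncomputable def Hfun (l : ℕ) (u z : ℝ) : ℝ :=
  (u + 3 * z^l / (l:ℝ) - (1-z) * (1 - 4 * z^(l-1)))^3
    + 6 * (1-z) * (1 - z^(l-1)) * (u + 3 * z^l / (l:ℝ) - (1-z) * (1 - 4 * z^(l-1)))
    - (1-z) * (1 - z^(l-1)) ^ (-2 : ℤ)
    + 8 * (1-z)^2 * (1 - z^(l-1))^5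


private lemma certA (z w : ℝ) (hz0 : 0 < z) (hw0 : 0 < w) (hq : (0:ℝ) ≤ z^2 - w)
    (hts : (0:ℝ) < 1 - z) (hss : (0:ℝ) < 1 - w) (hh : (0:ℝ) ≤ 3 - 4*z + z*w) :
    (1-w)^2*(z*w+4*(1-z)*w-(1-z))^3 + 6*(1-z)*(1-w)^3*(z*w+4*(1-z)*w-(1-z))
      + 8*(1-z)^2*(1-w)^7 - (1-z) < 0 := by
  have ht : (0:ℝ) ≤ 1 - z := hts.le
  have hs : (0:ℝ) ≤ 1 - w := hss.le
  have hid : -((1-w)^2*(z*w+4*(1-z)*w-(1-z))^3 + 6*(1-z)*(1-w)^3*(z*w+4*(1-z)*w-(1-z))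
      + 8*(1-z)^2*(1-w)^7 - (1-z)) = (2187382947261163155715597533715/38948498728973521011282141904896)*((1-w)^4*w) + (170637668609639957471750778353/1043263358811790741373628801024)*((1-w)^8*w) + (20930740255693173649066239055633/116845496186920563033846425714688)*((1-w)^11*w) + (3022611210256914247484239/67082263298083252403139712)*((1-w)^6*(z^2-w)^2) + (39184996108669275161974935439/618230138555135254147335585792)*((1-z)*(1-w)^8*w^3) + (33564098957653513771432565081/309115069277567627073667792896)*((1-z)^2*(1-w)^7*w^3) + (2448877620227751445250411857/4829922957461994173026059264)*((1-z)^6*(1-w)^3*w^3) + (8962086005048370322893103/67082263298083252403139712)*((1-z)^7*(1-w)^2*w^3) + (39184996108669275161974935439/618230138555135254147335585792)*((1-w)^8*(3-4*z+z*w)*w^2) + (256674079638695673026581/2096320728065101637598116)*((1-z)^8*(3-4*z+z*w)*w^2) + (2810448575507880695271185179/77278767319391906768416948224)*((1-w)^7*(3-4*z+z*w)*(z^2-w)*w) + (6542393040683620353470529353/463672603916351440610501689344)*((1-z)*(1-w)^6*(3-4*z+z*w)^2*w) + (382193051767481748600106837/679207915893092930581789584)*((1-w)^6*(z^2-w)^3)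 + (83202967126309252679390/1572240546048826228198587)*((1-w)*(3-4*z+z*w)^2*(z^2-w)) + (4997542226481549311462041/301870184841374635814128704)*((1-w)^4*z^4) + (2744310048497138092813141/18866886552585914738383044)*((1-w)^3*(3-4*z+z*w)*w*z^2) + (36438605358604698653028565/75467546210343658953532176)*((1-w)^3*(3-4*z+z*w)*(z^2-w)*z^2) + (189286803954355245245053343717/2782035623498108643663010136064)*((1-z)^2*(1-w)^6*w^3*z) + (770022238916087019079743/4192641456130203275196232)*((1-z)^8*w^3*z) + (30026303245233540246091756555/43469306617157947557234533376)*((1-z)^2*(1-w)^5*(z^2-w)*w^2*z) + (534213544765034157807752989813/1391017811749054321831505068032)*((1-z)^2*(1-w)^4*(3-4*z+z*w)^2*w*z) + (26750217087559353862902035/113201319315515488430298264)*((1-z)^4*(1-w)^2*(3-4*z+z*w)^2*w*z) + (8710505759368524922397513/100623394947124878604709568)*((1-z)^6*(3-4*z+z*w)^2*w*z) + (1788371238818284520203745/4716721638146478684595761)*((1-z)^3*(1-w)*(3-4*z+z*w)^2*(z^2-w)*z) + (1/3)*((1-w)*w^4) + (13809408651417683969266413405677/38948498728973521011282141904896)*((1-w)^4*w^4)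 + (18184741569221303077889795194349/12982832909657840337094047301632)*((1-w)^5*w^4) + (34369603046509166634798590117831/19474249364486760505641070952448)*((1-w)^6*w^4) + (11699697505269668992135329994145/19474249364486760505641070952448)*((1-w)^7*w^4) + (20930740255693173649066239055633/116845496186920563033846425714688)*((1-w)^8*w^4) + (2/3)*((1-z)*(1-w)*w^4) + (161143956030832142783344065961/927345207832702881221003378688)*((1-z)^4*(1-w)^4*w^4) + (18824369053575397473043371/134164526596166504806279424)*((1-z)^8*w^4) + (21611196601083052831196185/12577924368390609825588696)*((1-w)^3*(z^2-w)*w^3) + (962121882765763529111085407/1358415831786185861163579168)*((1-w)^6*(z^2-w)*w^3) + (24975565360395686780551521463/231836301958175720305250844672)*((1-z)^2*(1-w)^5*(z^2-w)*w^3) + (1/3)*((3-4*z+z*w)*w^3) + (2/3)*((1-w)*(3-4*z+z*w)*w^3) + (2224824503745615406364361463/1358415831786185861163579168)*((1-w)^5*(3-4*z+z*w)*w^3) + (5920759050660430445794602773/103038356425855875691222597632)*((1-z)^4*(1-w)^3*(3-4*z+z*w)*w^3) + (3926521707634182588023819/134164526596166504806279424)*((1-z)^7*(3-4*z+z*w)*w^3)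 + (1515919306701711223943825143/603740369682749271628257408)*((1-w)^4*(z^2-w)^2*w^2) + (3102879608534497830057479/1572240546048826228198587)*((1-w)^2*(3-4*z+z*w)*(z^2-w)*w^2) + (11413995160263711682057695391/16300989981434230333962950016)*((1-w)^5*(3-4*z+z*w)*(z^2-w)*w^2) + (2716476486654858758592076243165/8346106870494325930989030408192)*((1-z)*(1-w)^5*(3-4*z+z*w)*(z^2-w)*w^2) + (250326134442133350576273592601/695508905874527160915752534016)*((1-z)^2*(1-w)^4*(3-4*z+z*w)*(z^2-w)*w^2) + (33564098957653513771432565081/309115069277567627073667792896)*((1-w)^6*(3-4*z+z*w)^2*w^2) + (247053820815294468932072347/226402638631030976860596528)*((1-z)*(1-w)^3*(3-4*z+z*w)^2*w^2) + (640631033890770649733946026305/927345207832702881221003378688)*((1-z)^3*(1-w)^3*(3-4*z+z*w)^2*w^2) + (70548402033591723507429565/402493579788499514418838272)*((1-z)^5*(1-w)*(3-4*z+z*w)^2*w^2) + (6345199831778007337209603/4192641456130203275196232)*((1-w)^2*(z^2-w)^3*w) + (513348159277391346053162/1572240546048826228198587)*((1-z)^3*(1-w)^2*(z^2-w)^3*w)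 + (41601483563154626339695/524080182016275409399529)*((1-w)*(3-4*z+z*w)*(z^2-w)^2*w) + (2381686361499144357420553001/1811221109048247814884772224)*((1-z)*(1-w)^3*(3-4*z+z*w)*(z^2-w)^2*w) + (59145780811800620625104/4716721638146478684595761)*((1-w)^2*(3-4*z+z*w)^2*(z^2-w)*w) + (1815330133350258219571221917/2037623747679278791745368752)*((1-w)^4*(3-4*z+z*w)^2*(z^2-w)*w) + (1633825868979051659771159032073/4173053435247162965494515204096)*((1-w)^5*(3-4*z+z*w)^2*(z^2-w)*w) + (318346804484689244889351955759/463672603916351440610501689344)*((1-z)*(1-w)^4*(3-4*z+z*w)^2*(z^2-w)*w) + (2420456731069068903153130855/43469306617157947557234533376)*((1-z)^2*(1-w)^3*(3-4*z+z*w)^2*(z^2-w)*w) + (2669094026129578383063459691/3622442218096495629769544448)*((1-z)^3*(1-w)^2*(3-4*z+z*w)^2*(z^2-w)*w) + (12097958719293731320924973/37733773105171829476766088)*((1-z)^4*(1-w)*(3-4*z+z*w)^2*(z^2-w)*w) + (2219037707419653179394955/33541131649041626201569856)*((1-z)^5*(3-4*z+z*w)^2*(z^2-w)*w) + (48856296991969818094467501155/2782035623498108643663010136064)*((1-w)^5*(3-4*z+z*w)^3*w)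 + (988492394155970579314153/4716721638146478684595761)*((1-w)^4*(z^2-w)^4) + (20568341498104880548428647/25155848736781219651177392)*((1-w)^2*(3-4*z+z*w)*(z^2-w)^3) + (1452096512779041980475293/2096320728065101637598116)*((1-z)*(1-w)^2*(3-4*z+z*w)*(z^2-w)^3) + (41601483563154626339695/3144481092097652456397174)*((1-w)*(3-4*z+z*w)^2*(z^2-w)^2) + (2175829611109526492080380583/5433663327144743444654316672)*((1-w)^3*(3-4*z+z*w)^2*(z^2-w)^2) + (41601483563154626339695/6288962184195304912794348)*((1-z)*(1-w)*(3-4*z+z*w)^2*(z^2-w)^2) + (99489966090925284160715509/226402638631030976860596528)*((1-z)*(1-w)^3*(3-4*z+z*w)^2*(z^2-w)^2) + (7278289405962601959834065/37733773105171829476766088)*((1-z)^2*(1-w)*(3-4*z+z*w)^2*(z^2-w)^2) + (274471280637347651361359/14150164914439436053787283)*((1-z)^2*(1-w)^2*(3-4*z+z*w)^3*(z^2-w)) := by ring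
  linarith [(mul_pos (pow_pos hss 4) hw0), (mul_nonneg (pow_nonneg hs 8) hw0.le), (mul_nonneg (pow_nonneg hs 11) hw0.le), (mul_nonneg (pow_nonneg hs 6) (pow_nonneg hq 2)), (mul_nonneg (mul_nonneg ht (pow_nonneg hs 8)) (pow_nonneg hw0.le 3)), (mul_nonneg (mul_nonneg (pow_nonneg ht 2) (pow_nonneg hs 7)) (pow_nonneg hw0.le 3)), (mul_nonneg (mul_nonneg (pow_nonneg ht 6) (pow_nonneg hs 3)) (pow_nonneg hw0.le 3)), (mul_nonneg (mul_nonneg (pow_nonneg ht 7) (pow_nonneg hs 2)) (pow_nonneg hw0.le 3)), (mul_nonneg (mul_nonneg (pow_nonneg hs 8) hh) (pow_nonneg hw0.le 2)), (mul_nonneg (mul_nonneg (pow_nonneg ht 8) hh) (pow_nonneg hw0.le 2)), (mul_nonneg (mul_nonneg (mul_nonneg (pow_nonneg hs 7) hh) hq) hw0.le), (mul_nonneg (mul_nonneg (mul_nonneg ht (pow_nonneg hs 6)) (pow_nonneg hh 2)) hw0.le), (mul_nonneg (pow_nonneg hs 6) (pow_nonneg hq 3)), (mul_nonneg (mul_nonneg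 hs (pow_nonneg hh 2)) hq), (mul_nonneg (pow_nonneg hs 4) (pow_nonneg hz0.le 4)), (mul_nonneg (mul_nonneg (mul_nonneg (pow_nonneg hs 3) hh) hw0.le) (pow_nonneg hz0.le 2)), (mul_nonneg (mul_nonneg (mul_nonneg (pow_nonneg hs 3) hh) hq) (pow_nonneg hz0.le 2)), (mul_nonneg (mul_nonneg (mul_nonneg (pow_nonneg ht 2) (pow_nonneg hs 6)) (pow_nonneg hw0.le 3)) hz0.le), (mul_nonneg (mul_nonneg (pow_nonneg ht 8) (pow_nonneg hw0.le 3)) hz0.le), (mul_nonneg (mul_nonneg (mul_nonneg (mul_nonneg (pow_nonneg ht 2) (pow_nonneg hs 5)) hq) (pow_nonneg hw0.le 2)) hz0.le), (mul_nonneg (mul_nonneg (mul_nonneg (mul_nonneg (pow_nonneg ht 2) (pow_nonneg hs 4)) (pow_nonneg hh 2)) hw0.le) hz0.le), (mul_nonneg (mul_nonneg (mul_nonneg (mul_nonneg (pow_nonneg ht 4) (pow_nonneg hs 2)) (pow_nonneg hh 2)) hw0.le) hz0.le), (mul_nonneg (mul_nonneg (mul_nonneg (pow_nonneg ht 6) (pow_nonneg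 hh 2)) hw0.le) hz0.le), (mul_nonneg (mul_nonneg (mul_nonneg (mul_nonneg (pow_nonneg ht 3) hs) (pow_nonneg hh 2)) hq) hz0.le), (mul_nonneg hs (pow_nonneg hw0.le 4)), (mul_nonneg (pow_nonneg hs 4) (pow_nonneg hw0.le 4)), (mul_nonneg (pow_nonneg hs 5) (pow_nonneg hw0.le 4)), (mul_nonneg (pow_nonneg hs 6) (pow_nonneg hw0.le 4)), (mul_nonneg (pow_nonneg hs 7) (pow_nonneg hw0.le 4)), (mul_nonneg (pow_nonneg hs 8) (pow_nonneg hw0.le 4)), (mul_nonneg (mul_nonneg ht hs) (pow_nonneg hw0.le 4)), (mul_nonneg (mul_nonneg (pow_nonneg ht 4) (pow_nonneg hs 4)) (pow_nonneg hw0.le 4)), (mul_nonneg (pow_nonneg ht 8) (pow_nonneg hw0.le 4)), (mul_nonneg (mul_nonneg (pow_nonneg hs 3) hq) (pow_nonneg hw0.le 3)), (mul_nonneg (mul_nonneg (pow_nonneg hs 6) hq) (pow_nonneg hw0.le 3)), (mul_nonneg (mul_nonneg (mul_nonneg (pow_nonneg ht 2) (pow_nonneg hs 5)) hq) (pow_nonneg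 hw0.le 3)), (mul_nonneg hh (pow_nonneg hw0.le 3)), (mul_nonneg (mul_nonneg hs hh) (pow_nonneg hw0.le 3)), (mul_nonneg (mul_nonneg (pow_nonneg hs 5) hh) (pow_nonneg hw0.le 3)), (mul_nonneg (mul_nonneg (mul_nonneg (pow_nonneg ht 4) (pow_nonneg hs 3)) hh) (pow_nonneg hw0.le 3)), (mul_nonneg (mul_nonneg (pow_nonneg ht 7) hh) (pow_nonneg hw0.le 3)), (mul_nonneg (mul_nonneg (pow_nonneg hs 4) (pow_nonneg hq 2)) (pow_nonneg hw0.le 2)), (mul_nonneg (mul_nonneg (mul_nonneg (pow_nonneg hs 2) hh) hq) (pow_nonneg hw0.le 2)), (mul_nonneg (mul_nonneg (mul_nonneg (pow_nonneg hs 5) hh) hq) (pow_nonneg hw0.le 2)), (mul_nonneg (mul_nonneg (mul_nonneg (mul_nonneg ht (pow_nonneg hs 5)) hh) hq) (pow_nonneg hw0.le 2)), (mul_nonneg (mul_nonneg (mul_nonneg (mul_nonneg (pow_nonneg ht 2) (pow_nonneg hs 4)) hh) hq) (pow_nonneg hw0.le 2)), (mul_nonneg (mul_nonneg (pow_nonneg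 hs 6) (pow_nonneg hh 2)) (pow_nonneg hw0.le 2)), (mul_nonneg (mul_nonneg (mul_nonneg ht (pow_nonneg hs 3)) (pow_nonneg hh 2)) (pow_nonneg hw0.le 2)), (mul_nonneg (mul_nonneg (mul_nonneg (pow_nonneg ht 3) (pow_nonneg hs 3)) (pow_nonneg hh 2)) (pow_nonneg hw0.le 2)), (mul_nonneg (mul_nonneg (mul_nonneg (pow_nonneg ht 5) hs) (pow_nonneg hh 2)) (pow_nonneg hw0.le 2)), (mul_nonneg (mul_nonneg (pow_nonneg hs 2) (pow_nonneg hq 3)) hw0.le), (mul_nonneg (mul_nonneg (mul_nonneg (pow_nonneg ht 3) (pow_nonneg hs 2)) (pow_nonneg hq 3)) hw0.le), (mul_nonneg (mul_nonneg (mul_nonneg hs hh) (pow_nonneg hq 2)) hw0.le), (mul_nonneg (mul_nonneg (mul_nonneg (mul_nonneg ht (pow_nonneg hs 3)) hh) (pow_nonneg hq 2)) hw0.le), (mul_nonneg (mul_nonneg (mul_nonneg (pow_nonneg hs 2) (pow_nonneg hh 2)) hq) hw0.le), (mul_nonneg (mul_nonneg (mul_nonneg (pow_nonneg hs 4) (pow_nonneg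 hh 2)) hq) hw0.le), (mul_nonneg (mul_nonneg (mul_nonneg (pow_nonneg hs 5) (pow_nonneg hh 2)) hq) hw0.le), (mul_nonneg (mul_nonneg (mul_nonneg (mul_nonneg ht (pow_nonneg hs 4)) (pow_nonneg hh 2)) hq) hw0.le), (mul_nonneg (mul_nonneg (mul_nonneg (mul_nonneg (pow_nonneg ht 2) (pow_nonneg hs 3)) (pow_nonneg hh 2)) hq) hw0.le), (mul_nonneg (mul_nonneg (mul_nonneg (mul_nonneg (pow_nonneg ht 3) (pow_nonneg hs 2)) (pow_nonneg hh 2)) hq) hw0.le), (mul_nonneg (mul_nonneg (mul_nonneg (mul_nonneg (pow_nonneg ht 4) hs) (pow_nonneg hh 2)) hq) hw0.le), (mul_nonneg (mul_nonneg (mul_nonneg (pow_nonneg ht 5) (pow_nonneg hh 2)) hq) hw0.le), (mul_nonneg (mul_nonneg (pow_nonneg hs 5) (pow_nonneg hh 3)) hw0.le), (mul_nonneg (pow_nonneg hs 4) (pow_nonneg hq 4)), (mul_nonneg (mul_nonneg (pow_nonneg hs 2) hh) (pow_nonneg hq 3)), (mul_nonneg (mul_nonneg (mul_nonneg ht (pow_nonneg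 hs 2)) hh) (pow_nonneg hq 3)), (mul_nonneg (mul_nonneg hs (pow_nonneg hh 2)) (pow_nonneg hq 2)), (mul_nonneg (mul_nonneg (pow_nonneg hs 3) (pow_nonneg hh 2)) (pow_nonneg hq 2)), (mul_nonneg (mul_nonneg (mul_nonneg ht hs) (pow_nonneg hh 2)) (pow_nonneg hq 2)), (mul_nonneg (mul_nonneg (mul_nonneg ht (pow_nonneg hs 3)) (pow_nonneg hh 2)) (pow_nonneg hq 2)), (mul_nonneg (mul_nonneg (mul_nonneg (pow_nonneg ht 2) hs) (pow_nonneg hh 2)) (pow_nonneg hq 2)), (mul_nonneg (mul_nonneg (mul_nonneg (pow_nonneg ht 2) (pow_nonneg hs 2)) (pow_nonneg hh 3)) hq)]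

private lemma certB (z w : ℝ) (hz0 : 0 < z) (hw0 : 0 < w) (hq : (0:ℝ) ≤ z^2 - w)
    (hts : (0:ℝ) < 1 - z) (hss : (0:ℝ) < 1 - w) (hg : (0:ℝ) ≤ 4*z - z*w - 3) :
    ((1-z)*(3*w+4*w*(1-w)-(1-w)))^3 + 6*(1-z)*(1-w)^3*((1-z)*(3*w+4*w*(1-w)-(1-w)))
      + 8*(1-z)^2*(1-w)^8 - (1-z)*(1-w) < 0 := by
  have ht : (0:ℝ) ≤ 1 - z := hts.le
  have hs : (0:ℝ) ≤ 1 - w := hss.le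
  have hid : -(((1-z)*(3*w+4*w*(1-w)-(1-w)))^3 + 6*(1-z)*(1-w)^3*((1-z)*(3*w+4*w*(1-w)-(1-w)))
      + 8*(1-z)^2*(1-w)^8 - (1-z)*(1-w)) = (51986968523095958080749916007/139967808115677764989203109440)*((1-z)*(1-w)^5) + (6302244523356221274910979513/139967808115677764989203109440)*((1-z)*(1-w)^10) + (266407751609178827301856471/145799800120497671863753239)*((1-z)^3*(1-w)^9) + (170415375346010834225707528/437399400361493015591259717)*((1-z)^4*(1-w)^7) + (23674484962693979485415680/48599933373499223954584413)*((1-z)^6*(1-w)^5) + (20706191880424023821931392/145799800120497671863753239)*((1-z)^6*(1-w)^6) + (18942316489683508027392/5399992597055469328287157)*((1-z)^11*(1-w)) + (10503808665659841134592/5399992597055469328287157)*((1-z)^12) + (30771353166213759425593344/5399992597055469328287157)*((1-z)^5*(1-w)*z) + (46891576494400859591344128/5399992597055469328287157)*((1-z)^6*(1-w)*z) + (13575423949339647843583144165/27993561623135552997840621888)*((1-z)*(1-w)^10*w) + (475009595028060812191237/32399955582332815969722942)*((1-z)*(1-w)*(4*z-z*w-3)) + (40890556741329468845355541/145799800120497671863753239)*((1-z)*(1-w)^5*(4*z-z*w-3))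 + (27056262898117387968076937/16199977791166407984861471)*((1-z)^2*(4*z-z*w-3)) + (9283655090366767733070585065/9331187207711850999280207296)*((1-z)*(1-w)^5*w^2) + (8615812281502636818432/5399992597055469328287157)*((1-z)^10*w^2) + (1371049397661004289828570489/583199200481990687455012956)*((1-z)*(1-w)^8*(4*z-z*w-3)*w) + (457443606068394763896063899/2332796801927962749820051824)*((1-z)*(1-w)^6*(4*z-z*w-3)^2) + (30716478113949494304768/5399992597055469328287157)*((1-z)^7*(1-w)*(4*z-z*w-3)^2) + (44698641567711065153028915151/4665593603855925499640103648)*((1-z)*(1-w)^7*(4*z-z*w-3)*w^2) + (179708396307530063316573605/291599600240995343727506478)*((1-z)^3*(1-w)^5*(4*z-z*w-3)*w^2) + (11464367465628383099904/5399992597055469328287157)*((1-z)^8*(4*z-z*w-3)*w^2) + (5109864083252962063781910769/4665593603855925499640103648)*((1-z)*(1-w)^6*(4*z-z*w-3)^2*w) + (14327814875951763243466141/518399289317325055515567072)*((1-z)*(1-w)^5*(4*z-z*w-3)^3) + (1306483705305081370972578857/13996780811567776498920310944)*((1-z)^2*(1-w)^4*(4*z-z*w-3)^3) + (1423823971064751237070848/5399992597055469328287157)*((1-z)^3*(4*z-z*w-3)^3)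 + (317576722773373823136009779/1555197867951975166546701216)*((1-z)^3*(1-w)^3*(4*z-z*w-3)^3) + (16936047705193223860045448/48599933373499223954584413)*((1-z)^4*(1-w)^2*(4*z-z*w-3)^3) + (19252110648321111204864/5399992597055469328287157)*((1-z)^6*(4*z-z*w-3)^3) + (17853240400063009803328268/16199977791166407984861471)*((1-z)*(1-w)^5*w*z^3) + (19970756768034438300131728/48599933373499223954584413)*((1-z)^3*(1-w)^3*(4*z-z*w-3)^2*z^2) + (279840835498366186391307/5399992597055469328287157)*((1-z)^6*(1-w)^2*w^3*z) + (337799477040247959846912/5399992597055469328287157)*((1-z)^2*(z^2-w)^3*z) + (10503808665659841134592/5399992597055469328287157)*((1-z)^5*(z^2-w)^3*z) + (72775830698380212627057907/1555197867951975166546701216)*((1-z)^2*(1-w)^3*(4*z-z*w-3)^3*z) + (1/1)*((1-z)*(1-w)*w^4) + (1/1)*((1-z)*(1-w)^2*w^4) + (63151149420976437999034097369/69983904057838882494601554720)*((1-z)*(1-w)^5*w^4) + (235568643414193927864375133771/69983904057838882494601554720)*((1-z)*(1-w)^6*w^4) + (13575423949339647843583144165/27993561623135552997840621888)*((1-z)*(1-w)^7*w^4)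 + (62020937502119559252357/5399992597055469328287157)*((1-z)^8*w^4) + (48587422281756992548664157/5399992597055469328287157)*((1-z)*(1-w)^3*(z^2-w)*w^3) + (4563469535194155989165234743/2332796801927962749820051824)*((1-z)*(1-w)^6*(z^2-w)*w^3) + (96071944124541361569372/5399992597055469328287157)*((1-z)^6*(1-w)*(z^2-w)*w^3) + (96724857151970387096977589/32399955582332815969722942)*((1-z)*(1-w)*(4*z-z*w-3)*w^3) + (75099864580264046971988449/10799985194110938656574314)*((1-z)*(1-w)^2*(4*z-z*w-3)*w^3) + (4879108998972560027721648/5399992597055469328287157)*((1-z)*(1-w)^3*(4*z-z*w-3)*w^3) + (1249268384682334475348161157/172799763105775018505189024)*((1-z)*(1-w)^6*(4*z-z*w-3)*w^3) + (118743537222380283895676302/16199977791166407984861471)*((1-z)^2*(4*z-z*w-3)*w^3) + (102581092706440570128575599/5399992597055469328287157)*((1-z)^2*(1-w)*(4*z-z*w-3)*w^3) + (5711755102147551568452973183/4665593603855925499640103648)*((1-z)^2*(1-w)^5*(4*z-z*w-3)*w^3) + (44172726613329118445847/5399992597055469328287157)*((1-z)^7*(4*z-z*w-3)*w^3) + (869116944169144437035528/16199977791166407984861471)*((1-z)^2*(1-w)^4*(z^2-w)^2*w^2)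 + (195465519852615764738460731/97199866746998447909168826)*((1-z)*(1-w)^4*(4*z-z*w-3)*(z^2-w)*w^2) + (2800907148283571043342065/16199977791166407984861471)*((1-z)^3*(1-w)^3*(4*z-z*w-3)*(z^2-w)*w^2) + (1039338641448900239347492/5399992597055469328287157)*((1-z)^4*(1-w)^2*(4*z-z*w-3)*(z^2-w)*w^2) + (60744186200699967454118549/5399992597055469328287157)*((1-z)*(1-w)^3*(4*z-z*w-3)^2*w^2) + (37533275226694217760768/5399992597055469328287157)*((1-z)^2*(4*z-z*w-3)^2*w^2) + (3004284674804046882256372949/4665593603855925499640103648)*((1-z)^2*(1-w)^4*(4*z-z*w-3)^2*w^2) + (9024279533067476968701527/259199644658662527757783536)*((1-z)^3*(1-w)^3*(4*z-z*w-3)^2*w^2) + (8615812281502636818432/5399992597055469328287157)*((1-z)^4*(1-w)*(z^2-w)^3*w) + (14198321598222446885376/5399992597055469328287157)*((1-z)^4*(1-w)*(4*z-z*w-3)^2*(z^2-w)*w) + (12511091742231405920256/5399992597055469328287157)*((1-z)*(4*z-z*w-3)^3*w) + (3373165237635569225580544/16199977791166407984861471)*((1-z)*(1-w)^2*(4*z-z*w-3)^3*w)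 + (1908857871204861154361344/16199977791166407984861471)*((1-z)^2*(1-w)*(4*z-z*w-3)^3*w) + (5566570396856121286656/5399992597055469328287157)*((1-z)^3*(1-w)*(z^2-w)^4) + (86902406752446274682880/5399992597055469328287157)*((1-z)^3*(4*z-z*w-3)*(z^2-w)^3) + (24508886886539629314048/5399992597055469328287157)*((1-z)^4*(4*z-z*w-3)*(z^2-w)^3) + (586801068110061559332864/5399992597055469328287157)*((1-z)^2*(4*z-z*w-3)^3*(z^2-w)) + (33362911312617082454016/5399992597055469328287157)*((1-z)*(4*z-z*w-3)^4) + (819172610519437614662696399/13996780811567776498920310944)*((1-z)*(1-w)^3*(4*z-z*w-3)^4) + (19630003588636466620041679/145799800120497671863753239)*((1-z)^2*(1-w)^2*(4*z-z*w-3)^4) + (244918045230091540578304/5399992597055469328287157)*((1-z)^3*(4*z-z*w-3)^4) + (3800771190713592036519385/48599933373499223954584413)*((1-z)^3*(1-w)*(4*z-z*w-3)^4) + (4076601607315130756544/5399992597055469328287157)*((1-z)^4*(4*z-z*w-3)^4) := by ring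
  linarith [(mul_pos hts (pow_pos hss 5)), (mul_nonneg ht (pow_nonneg hs 10)), (mul_nonneg (pow_nonneg ht 3) (pow_nonneg hs 9)), (mul_nonneg (pow_nonneg ht 4) (pow_nonneg hs 7)), (mul_nonneg (pow_nonneg ht 6) (pow_nonneg hs 5)), (mul_nonneg (pow_nonneg ht 6) (pow_nonneg hs 6)), (mul_nonneg (pow_nonneg ht 11) hs), (pow_nonneg ht 12), (mul_nonneg (mul_nonneg (pow_nonneg ht 5) hs) hz0.le), (mul_nonneg (mul_nonneg (pow_nonneg ht 6) hs) hz0.le), (mul_nonneg (mul_nonneg ht (pow_nonneg hs 10)) hw0.le), (mul_nonneg (mul_nonneg ht hs) hg), (mul_nonneg (mul_nonneg ht (pow_nonneg hs 5)) hg), (mul_nonneg (pow_nonneg ht 2) hg), (mul_nonneg (mul_nonneg ht (pow_nonneg hs 5)) (pow_nonneg hw0.le 2)), (mul_nonneg (pow_nonneg ht 10) (pow_nonneg hw0.le 2)), (mul_nonneg (mul_nonneg (mul_nonneg ht (pow_nonneg hs 8)) hg) hw0.le), (mul_nonneg (mul_nonneg ht (pow_nonneg hs 6)) (pow_nonneg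 hg 2)), (mul_nonneg (mul_nonneg (pow_nonneg ht 7) hs) (pow_nonneg hg 2)), (mul_nonneg (mul_nonneg (mul_nonneg ht (pow_nonneg hs 7)) hg) (pow_nonneg hw0.le 2)), (mul_nonneg (mul_nonneg (mul_nonneg (pow_nonneg ht 3) (pow_nonneg hs 5)) hg) (pow_nonneg hw0.le 2)), (mul_nonneg (mul_nonneg (pow_nonneg ht 8) hg) (pow_nonneg hw0.le 2)), (mul_nonneg (mul_nonneg (mul_nonneg ht (pow_nonneg hs 6)) (pow_nonneg hg 2)) hw0.le), (mul_nonneg (mul_nonneg ht (pow_nonneg hs 5)) (pow_nonneg hg 3)), (mul_nonneg (mul_nonneg (pow_nonneg ht 2) (pow_nonneg hs 4)) (pow_nonneg hg 3)), (mul_nonneg (pow_nonneg ht 3) (pow_nonneg hg 3)), (mul_nonneg (mul_nonneg (pow_nonneg ht 3) (pow_nonneg hs 3)) (pow_nonneg hg 3)), (mul_nonneg (mul_nonneg (pow_nonneg ht 4) (pow_nonneg hs 2)) (pow_nonneg hg 3)), (mul_nonneg (pow_nonneg ht 6) (pow_nonneg hg 3)), (mul_nonneg (mul_nonneg (mul_nonneg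 ht (pow_nonneg hs 5)) hw0.le) (pow_nonneg hz0.le 3)), (mul_nonneg (mul_nonneg (mul_nonneg (pow_nonneg ht 3) (pow_nonneg hs 3)) (pow_nonneg hg 2)) (pow_nonneg hz0.le 2)), (mul_nonneg (mul_nonneg (mul_nonneg (pow_nonneg ht 6) (pow_nonneg hs 2)) (pow_nonneg hw0.le 3)) hz0.le), (mul_nonneg (mul_nonneg (pow_nonneg ht 2) (pow_nonneg hq 3)) hz0.le), (mul_nonneg (mul_nonneg (pow_nonneg ht 5) (pow_nonneg hq 3)) hz0.le), (mul_nonneg (mul_nonneg (mul_nonneg (pow_nonneg ht 2) (pow_nonneg hs 3)) (pow_nonneg hg 3)) hz0.le), (mul_nonneg (mul_nonneg ht hs) (pow_nonneg hw0.le 4)), (mul_nonneg (mul_nonneg ht (pow_nonneg hs 2)) (pow_nonneg hw0.le 4)), (mul_nonneg (mul_nonneg ht (pow_nonneg hs 5)) (pow_nonneg hw0.le 4)), (mul_nonneg (mul_nonneg ht (pow_nonneg hs 6)) (pow_nonneg hw0.le 4)), (mul_nonneg (mul_nonneg ht (pow_nonneg hs 7)) (pow_nonneg hw0.le 4)), (mul_nonneg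 (pow_nonneg ht 8) (pow_nonneg hw0.le 4)), (mul_nonneg (mul_nonneg (mul_nonneg ht (pow_nonneg hs 3)) hq) (pow_nonneg hw0.le 3)), (mul_nonneg (mul_nonneg (mul_nonneg ht (pow_nonneg hs 6)) hq) (pow_nonneg hw0.le 3)), (mul_nonneg (mul_nonneg (mul_nonneg (pow_nonneg ht 6) hs) hq) (pow_nonneg hw0.le 3)), (mul_nonneg (mul_nonneg (mul_nonneg ht hs) hg) (pow_nonneg hw0.le 3)), (mul_nonneg (mul_nonneg (mul_nonneg ht (pow_nonneg hs 2)) hg) (pow_nonneg hw0.le 3)), (mul_nonneg (mul_nonneg (mul_nonneg ht (pow_nonneg hs 3)) hg) (pow_nonneg hw0.le 3)), (mul_nonneg (mul_nonneg (mul_nonneg ht (pow_nonneg hs 6)) hg) (pow_nonneg hw0.le 3)), (mul_nonneg (mul_nonneg (pow_nonneg ht 2) hg) (pow_nonneg hw0.le 3)), (mul_nonneg (mul_nonneg (mul_nonneg (pow_nonneg ht 2) hs) hg) (pow_nonneg hw0.le 3)), (mul_nonneg (mul_nonneg (mul_nonneg (pow_nonneg ht 2) (pow_nonneg hs 5)) hg)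 (pow_nonneg hw0.le 3)), (mul_nonneg (mul_nonneg (pow_nonneg ht 7) hg) (pow_nonneg hw0.le 3)), (mul_nonneg (mul_nonneg (mul_nonneg (pow_nonneg ht 2) (pow_nonneg hs 4)) (pow_nonneg hq 2)) (pow_nonneg hw0.le 2)), (mul_nonneg (mul_nonneg (mul_nonneg (mul_nonneg ht (pow_nonneg hs 4)) hg) hq) (pow_nonneg hw0.le 2)), (mul_nonneg (mul_nonneg (mul_nonneg (mul_nonneg (pow_nonneg ht 3) (pow_nonneg hs 3)) hg) hq) (pow_nonneg hw0.le 2)), (mul_nonneg (mul_nonneg (mul_nonneg (mul_nonneg (pow_nonneg ht 4) (pow_nonneg hs 2)) hg) hq) (pow_nonneg hw0.le 2)), (mul_nonneg (mul_nonneg (mul_nonneg ht (pow_nonneg hs 3)) (pow_nonneg hg 2)) (pow_nonneg hw0.le 2)), (mul_nonneg (mul_nonneg (pow_nonneg ht 2) (pow_nonneg hg 2)) (pow_nonneg hw0.le 2)), (mul_nonneg (mul_nonneg (mul_nonneg (pow_nonneg ht 2) (pow_nonneg hs 4)) (pow_nonneg hg 2)) (pow_nonneg hw0.le 2)), (mul_nonneg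 (mul_nonneg (mul_nonneg (pow_nonneg ht 3) (pow_nonneg hs 3)) (pow_nonneg hg 2)) (pow_nonneg hw0.le 2)), (mul_nonneg (mul_nonneg (mul_nonneg (pow_nonneg ht 4) hs) (pow_nonneg hq 3)) hw0.le), (mul_nonneg (mul_nonneg (mul_nonneg (mul_nonneg (pow_nonneg ht 4) hs) (pow_nonneg hg 2)) hq) hw0.le), (mul_nonneg (mul_nonneg ht (pow_nonneg hg 3)) hw0.le), (mul_nonneg (mul_nonneg (mul_nonneg ht (pow_nonneg hs 2)) (pow_nonneg hg 3)) hw0.le), (mul_nonneg (mul_nonneg (mul_nonneg (pow_nonneg ht 2) hs) (pow_nonneg hg 3)) hw0.le), (mul_nonneg (mul_nonneg (pow_nonneg ht 3) hs) (pow_nonneg hq 4)), (mul_nonneg (mul_nonneg (pow_nonneg ht 3) hg) (pow_nonneg hq 3)), (mul_nonneg (mul_nonneg (pow_nonneg ht 4) hg) (pow_nonneg hq 3)), (mul_nonneg (mul_nonneg (pow_nonneg ht 2) (pow_nonneg hg 3)) hq), (mul_nonneg ht (pow_nonneg hg 4)), (mul_nonneg (mul_nonneg ht (pow_nonneg hs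 3)) (pow_nonneg hg 4)), (mul_nonneg (mul_nonneg (pow_nonneg ht 2) (pow_nonneg hs 2)) (pow_nonneg hg 4)), (mul_nonneg (pow_nonneg ht 3) (pow_nonneg hg 4)), (mul_nonneg (mul_nonneg (pow_nonneg ht 3) hs) (pow_nonneg hg 4)), (mul_nonneg (pow_nonneg ht 4) (pow_nonneg hg 4))]

/-- monotonicity in `B` of `B^3 + 6*t*s^3*B`. -/
private lemma mono (t s B B' R : ℝ) (ht : 0 ≤ t) (hs : 0 ≤ s) (hB : B ≤ B')
    (h : B'^3 + 6*t*s^3*B' + R < 0) : B^3 + 6*t*s^3*B + R < 0 := by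
  have h1 : 0 ≤ B'^2 + B'*B + B^2 + 6*t*s^3 := by
    nlinarith [sq_nonneg (B+B'), sq_nonneg (B-B'), mul_nonneg ht (pow_nonneg hs 3)]
  nlinarith [mul_nonneg (sub_nonneg.2 hB) h1]

private lemma master (z w c : ℝ) (hz0 : 0 < z) (hz1 : z < 1) (hw0 : 0 < w)
    (hq : w ≤ z^2) (hc0 : 0 ≤ c) (hc1 : c ≤ z*w) (hc2 : c*(1-w) ≤ 3*w*(1-z)) :
    (c+4*(1-z)*w-(1-z))^3 + 6*(1-z)*(1-w)*(c+4*(1-z)*w-(1-z))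
      - (1-z)/(1-w)^2 + 8*(1-z)^2*(1-w)^5 < 0 := by
  have hts : (0:ℝ) < 1 - z := by linarith
  have hss : (0:ℝ) < 1 - w := by nlinarith
  have hq' : (0:ℝ) ≤ z^2 - w := by linarith
  have key : ((1-w)*(c+4*(1-z)*w-(1-z)))^3
      + 6*(1-z)*(1-w)^3*((1-w)*(c+4*(1-z)*w-(1-z)))
      + (8*(1-z)^2*(1-w)^8 - (1-z)*(1-w)) < 0 := by
    rcases le_or_gt (z*(1-w)) (3*(1-z)) with hcase | hcase
    · refine mono (1-z) (1-w) _ ((1-w)*(z*w+4*(1-z)*w-(1-z))) _ hts.le hss.le ?_ ?_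
      · have h3 : c + 4*(1-z)*w - (1-z) ≤ z*w + 4*(1-z)*w - (1-z) := by linarith
        exact mul_le_mul_of_nonneg_left h3 hss.le
      · have hh : (0:ℝ) ≤ 3 - 4*z + z*w := by nlinarith
        have hA := certA z w hz0 hw0 hq' hts hss hh
        have h4 : ((1-w)*(z*w+4*(1-z)*w-(1-z)))^3
            + 6*(1-z)*(1-w)^3*((1-w)*(z*w+4*(1-z)*w-(1-z)))
            + (8*(1-z)^2*(1-w)^8 - (1-z)*(1-w))
            = (1-w) * ((1-w)^2*(z*w+4*(1-z)*w-(1-z))^3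
                + 6*(1-z)*(1-w)^3*(z*w+4*(1-z)*w-(1-z))
                + 8*(1-z)^2*(1-w)^7 - (1-z)) := by ring
        rw [h4]
        exact mul_neg_of_pos_of_neg hss hA
    · refine mono (1-z) (1-w) _ ((1-z)*(3*w+4*w*(1-w)-(1-w))) _ hts.le hss.le ?_ ?_
      · nlinarith [hc2]
      · have hg : (0:ℝ) ≤ 4*z - z*w - 3 := by nlinarith
        have hB := certB z w hz0 hw0 hq' hts hss hg
        linarith [hB]
  have hident : (c+4*(1-z)*w-(1-z))^3 + 6*(1-z)*(1-w)*(c+4*(1-z)*w-(1-z))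
      - (1-z)/(1-w)^2 + 8*(1-z)^2*(1-w)^5
      = (((1-w)*(c+4*(1-z)*w-(1-z)))^3
        + 6*(1-z)*(1-w)^3*((1-w)*(c+4*(1-z)*w-(1-z)))
        + (8*(1-z)^2*(1-w)^8 - (1-z)*(1-w))) / (1-w)^3 := by
    field_simp
    ring
  rw [hident]
  exact div_neg_of_neg_of_pos key (by positivity)

private lemma geom_bound (z : ℝ) (hz0 : 0 ≤ z) (hz1 : z ≤ 1) (n : ℕ) :
    1 - z^n ≤ n*(1-z) := by
  induction n with
  | zero => simp
  | succ n ih =>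
      have hzn : z^n ≤ 1 := pow_le_one₀ hz0 hz1
      have hzn0 : 0 ≤ z^n := pow_nonneg hz0 n
      have h : 1 - z^(n+1) = (1 - z^n) + z^n*(1-z) := by ring
      rw [h]
      push_cast
      nlinarith

/-- `H(0,z) < 0` for every `l ≥ 3` and `z ∈ (0,1)`. -/
theorem stmt9 (l : ℕ) (hl : 3 ≤ l) (z : ℝ) (hz : z ∈ Set.Ioo (0:ℝ) 1) :
    Hfun l 0 z < 0 := by
  obtain ⟨hz0, hz1⟩ := hz
  have hl0 : (0:ℝ) < (l:ℝ) := by positivity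
  have hl3 : (3:ℝ) ≤ (l:ℝ) := by exact_mod_cast hl
  have hw0 : 0 < z^(l-1) := pow_pos hz0 _
  have hzl : z^l = z * z^(l-1) := by
    rw [← pow_succ']
    congr 1
    omega
  have hq : z^(l-1) ≤ z^2 := pow_le_pow_of_le_one hz0.le hz1.le (by omega)
  have hc0 : (0:ℝ) ≤ 3 * z^l / (l:ℝ) := by positivity
  have hc1 : 3 * z^l / (l:ℝ) ≤ z * z^(l-1) := by
    rw [div_le_iff₀ hl0, hzl]
    nlinarith [mul_pos hz0 hw0]
  have hc2 : (3 * z^l / (l:ℝ))*(1-z^(l-1)) ≤ 3*z^(l-1)*(1-z) := by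
    have hgeom : 1 - z^(l-1) ≤ ((l-1 : ℕ):ℝ)*(1-z) := geom_bound z hz0.le hz1.le (l-1)
    have hlcast : ((l-1 : ℕ):ℝ) = (l:ℝ) - 1 := by
      have h1 : (1:ℕ) ≤ l := by omega
      push_cast [Nat.cast_sub h1]
      ring
    rw [hlcast] at hgeom
    have hs1 : (0:ℝ) ≤ 1 - z^(l-1) := by nlinarith
    rw [hzl, div_mul_eq_mul_div, div_le_iff₀ hl0]
    have h1 : z * (1 - z^(l-1)) ≤ ((l:ℝ) - 1) * (1-z) := by
      nlinarith
    nlinarith [mul_pos hz0 hw0, mul_nonneg (mul_nonneg hz0.le hw0.le) (sub_nonneg.2 hz1.le)]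
  have hmaster := master z (z^(l-1)) (3 * z^l / (l:ℝ)) hz0 hz1 hw0 hq hc0 hc1 hc2
  have hH : Hfun l 0 z = (3 * z^l / (l:ℝ)+4*(1-z)*z^(l-1)-(1-z))^3
      + 6*(1-z)*(1-z^(l-1))*(3 * z^l / (l:ℝ)+4*(1-z)*z^(l-1)-(1-z))
      - (1-z)/(1-z^(l-1))^2 + 8*(1-z)^2*(1-z^(l-1))^5 := by
    have hzp : ((1:ℝ) - z^(l-1)) ^ (-2 : ℤ) = 1/(1 - z^(l-1))^2 := by
      rw [zpow_neg, one_div]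
      norm_cast
    rw [Hfun, hzp]
    ring
  rw [hH]
  exact hmaster
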